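/- arXiv:1908.03724 — 2 statements merged into one kernel-verified Lean document; each statement's English description precedes it below -/
import Mathlib

section
/- Let B = (b_1, …, b_n) ∈ ℝ^{m×n} be a basis of the lattice L = L(B), let δ ≥ 1, and let 2 ≤ i ≤ n. If B_{[i,n]} is δ-SVP-reduced and ‖b_i*‖ > δ·λ_1(L), then every vector v ∈ L with ‖v‖ = λ_1(L) satisfies π_i(v) = 0, i.e., v ∈ L(B_{[1,i−1]}); in particular, λ_1(L(B_{[1,i−1]})) = λ_1(L). -/
noncomputable section

/-- Euclidean space `ℝ^m`. -/
abbrev Euc (m : ℕ) : Type := EuclideanSpace ℝ (Fin m)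

variable {m : ℕ}

/-- `projGS B s` is the orthogonal projection `π_{s+1}` onto the subspace orthogonal to
`b_1, …, b_s` (0-based: orthogonal to `B 0, …, B (s-1)`). -/
def projGS (B : ℕ → Euc m) (s : ℕ) (x : Euc m) : Euc m :=
  (Submodule.orthogonalProjection ((Submodule.span ℝ (B '' Set.Iio s))ᗮ) x : Euc m)

/-- The Gram–Schmidt vector `b*_{i+1}` (0-based index `i`). -/
def gsoVec (B : ℕ → Euc m) (i : ℕ) : Euc m := projGS B i (B i)

/-- The projected block `B_{[s+1, s+ℓ]}` (0-based start `s`; the length is supplied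
separately to the predicates below). -/
def block (B : ℕ → Euc m) (s : ℕ) : ℕ → Euc m := fun t => projGS B s (B (s + t))

/-- Gram matrix of the first `ℓ` vectors. -/
def gram (B : ℕ → Euc m) (ℓ : ℕ) : Matrix (Fin ℓ) (Fin ℓ) ℝ :=
  Matrix.of fun i j => (inner ℝ (B i) (B j) : ℝ)

/-- `vol(L(B)) = det(BᵀB)^{1/2}` for the first `ℓ` vectors. -/
def volB (B : ℕ → Euc m) (ℓ : ℕ) : ℝ := Real.sqrt (gram B ℓ).det

/-- The lattice generated by the first `ℓ` vectors. -/
def latticeSpan (B : ℕ → Euc m) (ℓ : ℕ) : Submodule ℤ (Euc m) :=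
  Submodule.span ℤ (B '' Set.Iio ℓ)

/-- `λ₁(L)`: the minimum norm of a nonzero lattice vector. -/
def lambda1 (L : Submodule ℤ (Euc m)) : ℝ :=
  sInf {r : ℝ | ∃ x ∈ L, x ≠ 0 ∧ ‖x‖ = r}

/-- `B` (of rank `ℓ`) is `δ`-SVP-reduced. -/
def SVPReduced (δ : ℝ) (B : ℕ → Euc m) (ℓ : ℕ) : Prop :=
  ‖B 0‖ ≤ δ * lambda1 (latticeSpan B ℓ)

/-- `B` (of rank `ℓ`) is `δ`-HSVP-reduced. -/
def HSVPReduced (δ : ℝ) (B : ℕ → Euc m) (ℓ : ℕ) : Prop :=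
  ‖B 0‖ ≤ δ * volB B ℓ ^ ((1 : ℝ) / ℓ)

/-- The dual basis `B^× = B (BᵀB)⁻¹` of the first `ℓ` vectors (extended by `0`). -/
def dualFam (B : ℕ → Euc m) (ℓ : ℕ) : ℕ → Euc m := fun i =>
  if h : i < ℓ then ∑ j : Fin ℓ, ((gram B ℓ)⁻¹ j ⟨i, h⟩) • B j else 0

/-- The reversed dual basis `B^{-s}`. -/
def revDual (B : ℕ → Euc m) (ℓ : ℕ) : ℕ → Euc m := fun i => dualFam B ℓ (ℓ - 1 - i)

/-- `B` (of rank `ℓ`) is `δ`-DHSVP-reduced: its reversed dual basis is `δ`-HSVP-reduced. -/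
def DHSVPReduced (δ : ℝ) (B : ℕ → Euc m) (ℓ : ℕ) : Prop :=
  HSVPReduced δ (revDual B ℓ) ℓ

/-- `B = (b_1, …, b_{d+1})` is `δ`-twin-reduced: `B_{[1,d]}` is `δ`-HSVP-reduced and
`B_{[2,d+1]}` is `δ`-DHSVP-reduced. -/
def TwinReduced (δ : ℝ) (B : ℕ → Euc m) (d : ℕ) : Prop :=
  HSVPReduced δ (block B 0) d ∧ DHSVPReduced δ (block B 1) d

/-- Gram–Schmidt coefficient `μ_{i,j}` (0-based). -/
def mu (B : ℕ → Euc m) (i j : ℕ) : ℝ :=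
  (inner ℝ (B i) (gsoVec B j) : ℝ) / ‖gsoVec B j‖ ^ 2

/-- The first `ℓ` vectors are size-reduced. -/
def SizeReduced (B : ℕ → Euc m) (ℓ : ℕ) : Prop :=
  ∀ i j, j < i → i < ℓ → |mu B i j| ≤ 1 / 2

/-- The first `ℓ` vectors are `ε`-LLL-reduced. -/
def LLLReduced (ε : ℝ) (B : ℕ → Euc m) (ℓ : ℕ) : Prop :=
  SizeReduced B ℓ ∧
    ∀ i, 0 < i → i < ℓ →
      ‖gsoVec B (i - 1)‖ ^ 2 ≤ (1 + ε) * ‖mu B i (i - 1) • gsoVec B (i - 1) + gsoVec B i‖ ^ 2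

/-- `B` (of rank `ℓ`) is `δ`-DSVP-reduced: its reversed dual basis is `δ`-SVP-reduced
and `B` is `(1/3)`-LLL-reduced. -/
def DSVPReduced (δ : ℝ) (B : ℕ → Euc m) (ℓ : ℕ) : Prop :=
  SVPReduced δ (revDual B ℓ) ℓ ∧ LLLReduced (1 / 3) B ℓ

/-- `γ` is an admissible Hermite bound for rank `r`: every lattice generated by `r`
linearly independent vectors of a Euclidean space satisfies `λ₁² ≤ γ · vol^{2/r}`. -/
def IsHermiteBound (γ : ℝ) (r : ℕ) : Prop :=
  ∀ (m' : ℕ) (v : ℕ → Euc m'), LinearIndependent ℝ (fun i : Fin r => v i) →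
    lambda1 (latticeSpan v r) ^ 2 ≤ γ * volB v r ^ ((2 : ℝ) / r)


lemma mem_span_image_Iio_iff {R M : Type*} [Ring R] [AddCommGroup M] [Module R M]
    (f : ℕ → M) (ℓ : ℕ) (x : M) :
    x ∈ Submodule.span R (f '' Set.Iio ℓ) ↔
      ∃ c : ℕ → R, ∑ j ∈ Finset.range ℓ, c j • f j = x := by
  have himg : f '' Set.Iio ℓ = Set.range (fun j : Fin ℓ => f j) := by
    ext y; constructor
    · rintro ⟨a, ha, rfl⟩; exact ⟨⟨a, ha⟩, rfl⟩
    · rintro ⟨j, rfl⟩; exact ⟨j, j.isLt, rfl⟩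
  rw [himg, Submodule.mem_span_range_iff_exists_fun]
  constructor
  · rintro ⟨c, hc⟩
    refine ⟨fun j => if h : j < ℓ then c ⟨j, h⟩ else 0, ?_⟩
    rw [← Fin.sum_univ_eq_sum_range (fun j => (if h : j < ℓ then c ⟨j, h⟩ else 0) • f j) ℓ, ← hc]
    exact Finset.sum_congr rfl fun j _ => by simp [j.isLt]
  · rintro ⟨c, hc⟩
    exact ⟨fun j => c j, by rw [Fin.sum_univ_eq_sum_range (fun j => c j • f j) ℓ]; exact hc⟩

def Pmap (B : ℕ → Euc m) (s : ℕ) : Euc m →ₗ[ℝ] Euc m :=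
  ((Submodule.span ℝ (B '' Set.Iio s))ᗮ).subtype ∘ₗ
    (Submodule.orthogonalProjection ((Submodule.span ℝ (B '' Set.Iio s))ᗮ)).toLinearMap

lemma projGS_eq (B : ℕ → Euc m) (s : ℕ) (x : Euc m) : projGS B s x = Pmap B s x := rfl

lemma Pmap_eq_zero_iff (B : ℕ → Euc m) (s : ℕ) (x : Euc m) :
    Pmap B s x = 0 ↔ x ∈ Submodule.span ℝ (B '' Set.Iio s) := by
  set K := Submodule.span ℝ (B '' Set.Iio s)
  have h : Pmap B s x = ((Submodule.orthogonalProjection Kᗮ x : Kᗮ) : Euc m) := rfl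
  rw [h, ZeroMemClass.coe_eq_zero, Submodule.orthogonalProjectionOnto_eq_zero_iff,
    Submodule.orthogonal_orthogonal]

lemma Pmap_apply_basis_lt (B : ℕ → Euc m) (s : ℕ) {j : ℕ} (hj : j < s) : Pmap B s (B j) = 0 :=
  (Pmap_eq_zero_iff B s _).mpr (Submodule.subset_span ⟨j, hj, rfl⟩)

lemma Pmap_norm_le (B : ℕ → Euc m) (s : ℕ) (x : Euc m) : ‖Pmap B s x‖ ≤ ‖x‖ := by
  set K := Submodule.span ℝ (B '' Set.Iio s)
  have h1 : ‖Pmap B s x‖ = ‖Submodule.orthogonalProjection Kᗮ x‖ := rfl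
  rw [h1]
  calc ‖Submodule.orthogonalProjection Kᗮ x‖ ≤ ‖Submodule.orthogonalProjection Kᗮ‖ * ‖x‖ :=
        (Submodule.orthogonalProjection Kᗮ).le_opNorm x
    _ ≤ 1 * ‖x‖ := mul_le_mul_of_nonneg_right (Submodule.orthogonalProjectionOnto_norm_le _) (norm_nonneg x)
    _ = ‖x‖ := one_mul _

lemma Pmap_mem_block (B : ℕ → Euc m) {s n : ℕ} (hsn : s ≤ n) {v : Euc m}
    (hv : v ∈ latticeSpan B n) :
    Pmap B s v ∈ latticeSpan (block B s) (n - s) := by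
  rw [latticeSpan, mem_span_image_Iio_iff] at hv ⊢
  obtain ⟨z, hz⟩ := hv
  refine ⟨fun t => z (s + t), ?_⟩
  have hPv : Pmap B s v = ∑ j ∈ Finset.range n, z j • Pmap B s (B j) := by
    rw [← hz, map_sum]
    exact Finset.sum_congr rfl fun j _ => map_zsmul (Pmap B s) _ _
  have h0 : ∑ j ∈ Finset.Ico 0 s, z j • Pmap B s (B j) = 0 :=
    Finset.sum_eq_zero fun j hj => by
      rw [Pmap_apply_basis_lt B s (Finset.mem_Ico.mp hj).2, smul_zero]
  have hsplit : ∑ j ∈ Finset.range n, z j • Pmap B s (B j)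
      = ∑ t ∈ Finset.range (n - s), z (s + t) • Pmap B s (B (s + t)) := by
    rw [Finset.range_eq_Ico, ← Finset.sum_Ico_consecutive _ (Nat.zero_le s) hsn, h0, zero_add,
      Finset.sum_Ico_eq_sum_range]
  rw [hPv, hsplit]
  exact Finset.sum_congr rfl fun t _ => rfl

lemma mem_latticeSpan_of_mem_realSpan {n s : ℕ} (hsn : s ≤ n) (B : ℕ → Euc m)
    (hB : LinearIndependent ℝ (fun j : Fin n => B j)) {v : Euc m}
    (hv : v ∈ latticeSpan B n) (hvK : v ∈ Submodule.span ℝ (B '' Set.Iio s)) :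
    v ∈ latticeSpan B s := by
  rw [latticeSpan, mem_span_image_Iio_iff] at hv ⊢
  rw [mem_span_image_Iio_iff] at hvK
  obtain ⟨z, hz⟩ := hv
  obtain ⟨c, hc⟩ := hvK
  set g : ℕ → ℝ := fun j => (z j : ℝ) - (if j < s then c j else 0) with hg
  have e1 : ∑ j ∈ Finset.range n, ((z j : ℝ)) • B j = v := by
    rw [← hz]; exact Finset.sum_congr rfl fun j _ => Int.cast_smul_eq_zsmul ℝ (z j) (B j)
  have e2 : ∑ j ∈ Finset.range n, (if j < s then c j else 0) • B j = v := by
    rw [← Finset.sum_subset (Finset.range_subset_range.mpr hsn)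
      (fun j _ hj => by rw [if_neg (by simpa using hj), zero_smul])]
    rw [← hc]
    exact Finset.sum_congr rfl fun j hj => by rw [if_pos (Finset.mem_range.mp hj)]
  have hzero : ∑ j ∈ Finset.range n, g j • B j = 0 := by
    simp only [hg, sub_smul, Finset.sum_sub_distrib, e1, e2, sub_self]
  have hvanish : ∀ j, s ≤ j → j < n → z j = 0 := by
    have hsum : ∑ j : Fin n, g ↑j • B ↑j = 0 := by
      rw [Fin.sum_univ_eq_sum_range (fun j => g j • B j) n]; exact hzero
    have hli := Fintype.linearIndependent_iff.mp hB (fun j : Fin n => g ↑j) hsum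
    intro j hsj hjn
    have h2 := hli ⟨j, hjn⟩
    simp only [hg] at h2
    rw [if_neg (by omega)] at h2
    have : (z j : ℝ) = 0 := by linarith
    exact_mod_cast this
  refine ⟨z, ?_⟩
  rw [← hz]
  exact Finset.sum_subset (Finset.range_subset_range.mpr hsn)
    (fun j hj hjs => by
      rw [hvanish j (by simpa using hjs) (Finset.mem_range.mp hj), zero_smul])


lemma bddBelow_norms {m : ℕ} (L : Submodule ℤ (Euc m)) :
    BddBelow {r : ℝ | ∃ x ∈ L, x ≠ 0 ∧ ‖x‖ = r} :=
  ⟨0, by rintro r ⟨x, _, _, rfl⟩; exact norm_nonneg x⟩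

lemma lambda1_le {m : ℕ} {L : Submodule ℤ (Euc m)} {x : Euc m} (hx : x ∈ L) (hne : x ≠ 0) :
    lambda1 L ≤ ‖x‖ :=
  csInf_le (bddBelow_norms L) ⟨x, hx, hne, rfl⟩

lemma le_lambda1 {m : ℕ} {L : Submodule ℤ (Euc m)} {x : Euc m} (hx : x ∈ L) (hne : x ≠ 0)
    {c : ℝ} (h : ∀ y ∈ L, y ≠ 0 → c ≤ ‖y‖) : c ≤ lambda1 L :=
  le_csInf ⟨‖x‖, x, hx, hne, rfl⟩ (by rintro r ⟨y, hy, hyne, rfl⟩; exact h y hy hyne)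

/-- if `B_{[i,n]}` is `δ`-SVP-reduced and `‖b_i*‖ > δ λ₁(L)`, then every
shortest nonzero vector of `L` lies in `L(B_{[1,i-1]})`; in particular
`λ₁(L(B_{[1,i-1]})) = λ₁(L)`. -/
theorem shortest_in_prefix {m n i : ℕ} (hi2 : 2 ≤ i) (hin : i ≤ n) {δ : ℝ} (hδ : 1 ≤ δ)
    (B : ℕ → Euc m) (hB : LinearIndependent ℝ (fun j : Fin n => B j))
    (hblock : SVPReduced δ (block B (i - 1)) (n - (i - 1)))
    (hbig : δ * lambda1 (latticeSpan B n) < ‖gsoVec B (i - 1)‖) :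
    (∀ v ∈ latticeSpan B n, ‖v‖ = lambda1 (latticeSpan B n) →
        projGS B (i - 1) v = 0 ∧ v ∈ latticeSpan B (i - 1)) ∧
      lambda1 (latticeSpan B (i - 1)) = lambda1 (latticeSpan B n) := by
  set s := i - 1 with hsdef
  have hs1 : 1 ≤ s := by omega
  have hsn : s < n := by omega
  set lam := lambda1 (latticeSpan B n) with hlam
  set lam' := lambda1 (latticeSpan (block B s) (n - s)) with hlam'
  have hδ0 : (0 : ℝ) < δ := lt_of_lt_of_le one_pos hδ
  have hgs : ‖gsoVec B s‖ ≤ δ * lam' := hblock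
  have hlamlt : lam < lam' :=
    lt_of_mul_lt_mul_left (lt_of_lt_of_le hbig hgs) (le_of_lt hδ0)
  have hlong : ∀ v ∈ latticeSpan B n, Pmap B s v ≠ 0 → lam' ≤ ‖v‖ := by
    intro v hv hne
    exact le_trans (lambda1_le (Pmap_mem_block B (le_of_lt hsn) hv) hne) (Pmap_norm_le B s v)
  have main : ∀ v ∈ latticeSpan B n, ‖v‖ = lam → projGS B s v = 0 ∧ v ∈ latticeSpan B s := by
    intro v hv hnv
    have hproj : Pmap B s v = 0 := by
      by_contra h
      have := hlong v hv h
      rw [hnv] at this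
      linarith
    exact ⟨by rw [projGS_eq]; exact hproj,
      mem_latticeSpan_of_mem_realSpan (le_of_lt hsn) B hB hv ((Pmap_eq_zero_iff B s v).mp hproj)⟩
  refine ⟨main, ?_⟩
  have hB0ne : B 0 ≠ 0 := by
    have := hB.ne_zero ⟨0, by omega⟩
    simpa using this
  have hB0s : B 0 ∈ latticeSpan B s := Submodule.subset_span ⟨0, hs1, rfl⟩
  have hsub : latticeSpan B s ≤ latticeSpan B n :=
    Submodule.span_mono (Set.image_mono fun x hx => lt_of_lt_of_le hx (le_of_lt hsn))
  have h1 : lam ≤ lambda1 (latticeSpan B s) :=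
    le_lambda1 hB0s hB0ne fun y hy hyne => lambda1_le (hsub hy) hyne
  have h2 : lambda1 (latticeSpan B s) ≤ lam := by
    by_contra h
    push_neg at h
    have hc : lam < min (lambda1 (latticeSpan B s)) lam' := lt_min h hlamlt
    have hlb : min (lambda1 (latticeSpan B s)) lam' ≤ lam := by
      apply le_lambda1 (hsub hB0s) hB0ne
      intro y hy hyne
      by_cases hp : Pmap B s y = 0
      · exact le_trans (min_le_left _ _)
          (lambda1_le (mem_latticeSpan_of_mem_realSpan (le_of_lt hsn) B hB hy
            ((Pmap_eq_zero_iff B s y).mp hp)) hyne)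
      · exact le_trans (min_le_right _ _) (hlong y hy hp)
    linarith
  exact le_antisymm h2 h1


end
end

section
/- Let 2 ≤ q ≤ k be integers, let η ≥ 1 and M > 0, and let B = (b_1, …, b_n) ∈ ℝ^{m×n} be a basis with n ≥ max{k, q+1}. If B_{[1,q+1]} is η-twin-reduced and ‖b_i*‖ ≤ M for every i ∈ [q+1, max{k, q+1}], then vol(L(B_{[1,k]})) ≤ η^{q(q+1)/(q−1)} · M^k. -/
noncomputable section

variable {m : ℕ}

namespace GSAux

open Submodule Finset Matrix

variable {m : ℕ}

/-- Span of the first `s` vectors. -/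
def spanLt (B : ℕ → Euc m) (s : ℕ) : Submodule ℝ (Euc m) :=
  Submodule.span ℝ (B '' Set.Iio s)

lemma spanLt_mono (B : ℕ → Euc m) {s t : ℕ} (h : s ≤ t) : spanLt B s ≤ spanLt B t :=
  Submodule.span_mono (Set.image_mono (fun _ hx => lt_of_lt_of_le hx h))

lemma mem_spanLt_self (B : ℕ → Euc m) {j s : ℕ} (h : j < s) : B j ∈ spanLt B s :=
  Submodule.subset_span ⟨j, h, rfl⟩

lemma projGS_mem_orth (B : ℕ → Euc m) (s : ℕ) (x : Euc m) :
    projGS B s x ∈ (spanLt B s)ᗮ :=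
  (orthogonalProjection ((spanLt B s)ᗮ) x).2

lemma sub_projGS_mem (B : ℕ → Euc m) (s : ℕ) (x : Euc m) :
    x - projGS B s x ∈ spanLt B s := by
  have h := Submodule.sub_starProjection_mem_orthogonal (K := (spanLt B s)ᗮ) x
  rwa [Submodule.orthogonal_orthogonal] at h

lemma projGS_unique (B : ℕ → Euc m) {s : ℕ} {x v : Euc m}
    (h1 : v ∈ (spanLt B s)ᗮ) (h2 : x - v ∈ spanLt B s) : projGS B s x = v := by
  have hmem : projGS B s x - v ∈ (spanLt B s)ᗮ :=
    Submodule.sub_mem _ (projGS_mem_orth B s x) h1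
  have hmem2 : projGS B s x - v ∈ spanLt B s := by
    have : projGS B s x - v = (x - v) - (x - projGS B s x) := by abel
    rw [this]
    exact Submodule.sub_mem _ h2 (sub_projGS_mem B s x)
  have h0 : projGS B s x - v = 0 := by
    have := (Submodule.mem_inf.2 ⟨hmem2, hmem⟩)
    rwa [Submodule.inf_orthogonal_eq_bot, Submodule.mem_bot] at this
  exact sub_eq_zero.mp h0

lemma gsoVec_mem_orth (B : ℕ → Euc m) (i : ℕ) : gsoVec B i ∈ (spanLt B i)ᗮ :=
  projGS_mem_orth B i (B i)

lemma sub_gsoVec_mem (B : ℕ → Euc m) (i : ℕ) : B i - gsoVec B i ∈ spanLt B i :=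
  sub_projGS_mem B i (B i)

lemma gsoVec_mem_spanLt (B : ℕ → Euc m) {i s : ℕ} (h : i < s) :
    gsoVec B i ∈ spanLt B s := by
  have : gsoVec B i = B i - (B i - gsoVec B i) := by abel
  rw [this]
  exact Submodule.sub_mem _ (mem_spanLt_self B h)
    (spanLt_mono B (le_of_lt h) (sub_gsoVec_mem B i))

lemma inner_gsoVec_left_eq_zero (B : ℕ → Euc m) {i : ℕ} {x : Euc m}
    (hx : x ∈ spanLt B i) : (inner ℝ (gsoVec B i) x : ℝ) = 0 := by
  rw [real_inner_comm]
  exact (Submodule.mem_orthogonal _ _).1 (gsoVec_mem_orth B i) x hx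

lemma inner_gsoVec_right_eq_zero (B : ℕ → Euc m) {i : ℕ} {x : Euc m}
    (hx : x ∈ spanLt B i) : (inner ℝ x (gsoVec B i) : ℝ) = 0 := by
  exact (Submodule.mem_orthogonal _ _).1 (gsoVec_mem_orth B i) x hx

lemma inner_gsoVec_gsoVec (B : ℕ → Euc m) {i j : ℕ} (h : i ≠ j) :
    (inner ℝ (gsoVec B i) (gsoVec B j) : ℝ) = 0 := by
  rcases lt_or_gt_of_ne h with h' | h'
  · exact inner_gsoVec_right_eq_zero B (gsoVec_mem_spanLt B h')
  · exact inner_gsoVec_left_eq_zero B (gsoVec_mem_spanLt B h')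

lemma inner_gsoVec_self (B : ℕ → Euc m) (i : ℕ) :
    (inner ℝ (gsoVec B i) (B i) : ℝ) = ‖gsoVec B i‖ ^ 2 := by
  have h : (inner ℝ (gsoVec B i) (B i - gsoVec B i) : ℝ) = 0 :=
    inner_gsoVec_left_eq_zero B (sub_gsoVec_mem B i)
  have := real_inner_self_eq_norm_sq (gsoVec B i)
  rw [inner_sub_right] at h
  linarith

lemma spanLt_le_span_gso (B : ℕ → Euc m) (s : ℕ) :
    spanLt B s ≤ Submodule.span ℝ (gsoVec B '' Set.Iio s) := by
  induction s with
  | zero =>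
      have : (Set.Iio 0 : Set ℕ) = ∅ := by ext x; simp
      simp [spanLt, this]
  | succ s ih =>
      rw [spanLt, Submodule.span_le]
      rintro x ⟨j, hj, rfl⟩
      simp only [Set.mem_Iio] at hj
      have hsub : Submodule.span ℝ (gsoVec B '' Set.Iio s) ≤
          Submodule.span ℝ (gsoVec B '' Set.Iio (s+1)) :=
        Submodule.span_mono (Set.image_mono (fun _ hx => lt_of_lt_of_le hx (Nat.le_succ s)))
      rcases Nat.lt_or_ge j s with h' | h'
      · exact hsub (ih (mem_spanLt_self B h'))
      · have hj' : j = s := le_antisymm (Nat.lt_succ_iff.mp hj) h'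
        subst hj'
        have : B j = gsoVec B j + (B j - gsoVec B j) := by abel
        rw [this]
        exact Submodule.add_mem _
          (Submodule.subset_span ⟨j, by simp [Nat.lt_succ_iff], rfl⟩)
          (hsub (ih (sub_gsoVec_mem B j)))

lemma span_gso_eq (B : ℕ → Euc m) (s : ℕ) :
    Submodule.span ℝ (gsoVec B '' Set.Iio s) = spanLt B s := by
  refine le_antisymm ?_ (spanLt_le_span_gso B s)
  rw [Submodule.span_le]
  rintro x ⟨j, hj, rfl⟩
  exact gsoVec_mem_spanLt B hj

lemma mem_orth_of_inner_gso (B : ℕ → Euc m) {s : ℕ} {y : Euc m}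
    (h : ∀ j < s, (inner ℝ (gsoVec B j) y : ℝ) = 0) : y ∈ (spanLt B s)ᗮ := by
  rw [← span_gso_eq]
  rw [Submodule.mem_orthogonal]
  intro u hu
  induction hu using Submodule.span_induction with
  | mem u hu => obtain ⟨j, hj, rfl⟩ := hu; exact h j hj
  | zero => simp
  | add u v _ _ hu hv => rw [inner_add_left, hu, hv]; ring
  | smul c u _ hu => rw [inner_smul_left, hu]; simp

/-- Expansion of a vector of the span in the orthogonal GSO basis. -/
lemma expansion (B : ℕ → Euc m) {s : ℕ} (hnz : ∀ j < s, gsoVec B j ≠ 0)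
    {x : Euc m} (hx : x ∈ spanLt B s) :
    x = ∑ t : Fin s, ((inner ℝ (gsoVec B t) x : ℝ) / ‖gsoVec B t‖ ^ 2) • gsoVec B t := by
  set y := x - ∑ t : Fin s, ((inner ℝ (gsoVec B t) x : ℝ) / ‖gsoVec B t‖ ^ 2) • gsoVec B t with hy
  have hsum : (∑ t : Fin s, ((inner ℝ (gsoVec B t) x : ℝ) / ‖gsoVec B t‖ ^ 2) • gsoVec B t)
      ∈ spanLt B s := by
    apply Submodule.sum_mem
    intro t _
    exact Submodule.smul_mem _ _ (gsoVec_mem_spanLt B t.2)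
  have hy1 : y ∈ spanLt B s := Submodule.sub_mem _ hx hsum
  have hy2 : y ∈ (spanLt B s)ᗮ := by
    apply mem_orth_of_inner_gso
    intro j hj
    rw [hy, inner_sub_right, inner_sum]
    have : ∀ t : Fin s,
        (inner ℝ (gsoVec B j) (((inner ℝ (gsoVec B t) x : ℝ) / ‖gsoVec B t‖ ^ 2) • gsoVec B t) : ℝ)
        = if t = (⟨j, hj⟩ : Fin s) then (inner ℝ (gsoVec B j) x : ℝ) else 0 := by
      intro t
      rw [real_inner_smul_right]
      by_cases ht : t = (⟨j, hj⟩ : Fin s)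
      · have hcoe : (t : ℕ) = j := by rw [ht]
        rw [if_pos ht, hcoe, real_inner_self_eq_norm_sq]
        have hne : ‖gsoVec B j‖ ≠ 0 := norm_ne_zero_iff.mpr (hnz j hj)
        field_simp
      · have ht' : (t : ℕ) ≠ j := by
          intro h; exact ht (Fin.ext h)
        rw [if_neg ht, inner_gsoVec_gsoVec B (fun h => ht' h.symm), mul_zero]
    rw [Finset.sum_congr rfl (fun t _ => this t)]
    rw [Finset.sum_ite_eq' Finset.univ (⟨j, hj⟩ : Fin s) (fun _ => (inner ℝ (gsoVec B j) x : ℝ))]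
    simp
  have h0 : y = 0 := by
    have := (Submodule.mem_inf.2 ⟨hy1, hy2⟩)
    rwa [Submodule.inf_orthogonal_eq_bot, Submodule.mem_bot] at this
  exact sub_eq_zero.mp h0

lemma gram_eq_ldl (B : ℕ → Euc m) (s : ℕ) (hnz : ∀ j < s, gsoVec B j ≠ 0) :
    gram B s = (Matrix.of fun i t : Fin s =>
        (inner ℝ (gsoVec B t) (B i) : ℝ) / ‖gsoVec B t‖ ^ 2) *
      Matrix.diagonal (fun t : Fin s => ‖gsoVec B t‖ ^ 2) *
      (Matrix.of fun i t : Fin s =>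
        (inner ℝ (gsoVec B t) (B i) : ℝ) / ‖gsoVec B t‖ ^ 2)ᵀ := by
  ext i j
  rw [Matrix.mul_apply]
  have hBi : (B i : Euc m) ∈ spanLt B s := mem_spanLt_self B i.2
  have hexp := expansion B hnz hBi
  have : (inner ℝ (B (i : ℕ)) (B (j : ℕ)) : ℝ) =
      ∑ t : Fin s, ((inner ℝ (gsoVec B t) (B i) : ℝ) / ‖gsoVec B t‖ ^ 2) *
        (inner ℝ (gsoVec B t) (B j) : ℝ) := by
    conv_lhs => rw [hexp]
    rw [sum_inner]
    congr 1
    ext t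
    rw [real_inner_smul_left]
  rw [show (gram B s) i j = (inner ℝ (B (i : ℕ)) (B (j : ℕ)) : ℝ) from rfl, this]
  congr 1
  ext t
  rw [Matrix.mul_apply, Matrix.diagonal]
  simp only [Matrix.of_apply, Matrix.transpose_apply]
  rw [Finset.sum_eq_single t]
  · have hne : ‖gsoVec B (t : ℕ)‖ ≠ 0 := norm_ne_zero_iff.mpr (hnz t t.2)
    simp only [Matrix.of_apply]
    field_simp
    rw [if_pos trivial]; ring
  · intro b _ hb
    simp [Matrix.diagonal, hb]
  · intro h; exact absurd (Finset.mem_univ t) h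

lemma det_gram (B : ℕ → Euc m) (s : ℕ) (hnz : ∀ j < s, gsoVec B j ≠ 0) :
    (gram B s).det = ∏ t : Fin s, ‖gsoVec B t‖ ^ 2 := by
  rw [gram_eq_ldl B s hnz]
  set A := (Matrix.of fun i t : Fin s =>
        (inner ℝ (gsoVec B t) (B i) : ℝ) / ‖gsoVec B t‖ ^ 2) with hA
  have hdetA : A.det = 1 := by
    have htri : A.BlockTriangular OrderDual.toDual := by
      intro i j hij
      have hij' : (i : ℕ) < (j : ℕ) := hij
      have h0 : (inner ℝ (gsoVec B (j : ℕ)) (B (i : ℕ)) : ℝ) = 0 :=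
        inner_gsoVec_left_eq_zero B (spanLt_mono B hij' (mem_spanLt_self B (Nat.lt_succ_self _)) )
      simp only [hA, Matrix.of_apply]
      rw [h0, zero_div]
    rw [Matrix.det_of_lowerTriangular A htri]
    apply Finset.prod_eq_one
    intro i _
    have hne : ‖gsoVec B (i : ℕ)‖ ≠ 0 := norm_ne_zero_iff.mpr (hnz i i.2)
    simp only [hA, Matrix.of_apply]
    rw [inner_gsoVec_self B (i : ℕ)]
    field_simp
  rw [Matrix.det_mul, Matrix.det_mul, Matrix.det_transpose, hdetA, Matrix.det_diagonal,
    one_mul, mul_one]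

lemma volB_eq_prod (B : ℕ → Euc m) (s : ℕ) (hnz : ∀ j < s, gsoVec B j ≠ 0) :
    volB B s = ∏ t : Fin s, ‖gsoVec B t‖ := by
  rw [volB, det_gram B s hnz]
  rw [show (∏ t : Fin s, ‖gsoVec B t‖ ^ 2) = (∏ t : Fin s, ‖gsoVec B t‖) ^ 2 by
    rw [Finset.prod_pow]]
  exact Real.sqrt_sq (Finset.prod_nonneg fun t _ => norm_nonneg _)

lemma spanLt_bot (B : ℕ → Euc m) : spanLt B 0 = ⊥ := by
  have : (Set.Iio 0 : Set ℕ) = ∅ := by ext x; simp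
  simp [spanLt, this]

lemma block_zero (B : ℕ → Euc m) : block B 0 = B := by
  funext t
  show projGS B 0 (B (0 + t)) = B t
  rw [Nat.zero_add]
  have : B t ∈ (spanLt B 0)ᗮ := by
    rw [spanLt_bot]
    simp
  exact Submodule.starProjection_eq_self_iff.mpr this

lemma block_mem_orth (B : ℕ → Euc m) (s j : ℕ) : block B s j ∈ (spanLt B s)ᗮ :=
  projGS_mem_orth B s (B (s + j))

lemma spanLt_block_le (B : ℕ → Euc m) (s t : ℕ) :
    spanLt (block B s) t ≤ spanLt B (s + t) := by
  rw [spanLt, Submodule.span_le]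
  rintro x ⟨j, hj, rfl⟩
  simp only [Set.mem_Iio] at hj
  have : block B s j = B (s + j) - (B (s + j) - projGS B s (B (s + j))) := by
    show projGS B s (B (s+j)) = _; abel
  rw [this]
  exact Submodule.sub_mem _ (mem_spanLt_self B (by omega))
    (spanLt_mono B (Nat.le_add_right s t) (sub_projGS_mem B s (B (s + j))))

lemma spanLt_block_orth (B : ℕ → Euc m) (s t : ℕ) :
    spanLt (block B s) t ≤ (spanLt B s)ᗮ := by
  rw [spanLt, Submodule.span_le]
  rintro x ⟨j, hj, rfl⟩
  exact block_mem_orth B s j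

lemma spanLt_le_sup (B : ℕ → Euc m) (s t : ℕ) :
    spanLt B (s + t) ≤ spanLt B s ⊔ spanLt (block B s) t := by
  rw [spanLt, Submodule.span_le]
  rintro x ⟨r, hr, rfl⟩
  simp only [Set.mem_Iio] at hr
  rcases Nat.lt_or_ge r s with h' | h'
  · exact Submodule.mem_sup_left (mem_spanLt_self B h')
  · obtain ⟨j, rfl⟩ := Nat.exists_eq_add_of_le h'
    have hj : j < t := by omega
    have : B (s + j) = (B (s + j) - projGS B s (B (s + j))) + block B s j := by
      show _ = _ + projGS B s (B (s+j)); abel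
    rw [this]
    exact Submodule.add_mem _
      (Submodule.mem_sup_left (sub_projGS_mem B s (B (s + j))))
      (Submodule.mem_sup_right (mem_spanLt_self (block B s) hj))

lemma gsoVec_block (B : ℕ → Euc m) (s t : ℕ) :
    gsoVec (block B s) t = gsoVec B (s + t) := by
  apply projGS_unique
  · exact fun u hu =>
      (Submodule.mem_orthogonal _ _).1 (gsoVec_mem_orth B (s + t)) u (spanLt_block_le B s t hu)
  · set x := block B s t - gsoVec B (s + t) with hxdef
    have hx1 : x ∈ spanLt B (s + t) := by
      have h1 : block B s t = B (s + t) - (B (s + t) - projGS B s (B (s + t))) := by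
        show projGS B s (B (s+t)) = _; abel
      have : x = (B (s + t) - gsoVec B (s + t)) - (B (s + t) - projGS B s (B (s + t))) := by
        rw [hxdef, h1]; abel
      rw [this]
      exact Submodule.sub_mem _ (sub_gsoVec_mem B (s + t))
        (spanLt_mono B (Nat.le_add_right s t) (sub_projGS_mem B s (B (s + t))))
    have hx2 : x ∈ (spanLt B s)ᗮ := by
      apply Submodule.sub_mem
      · exact block_mem_orth B s t
      · exact Submodule.orthogonal_le (spanLt_mono B (Nat.le_add_right s t))
          (gsoVec_mem_orth B (s + t))
    obtain ⟨a, ha, w, hw, hx⟩ := Submodule.mem_sup.1 (spanLt_le_sup B s t hx1)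
    have ha0 : a = 0 := by
      have haorth : a ∈ (spanLt B s)ᗮ := by
        have : a = x - w := by rw [← hx]; abel
        rw [this]
        exact Submodule.sub_mem _ hx2 (spanLt_block_orth B s t hw)
      have := (Submodule.mem_inf.2 ⟨ha, haorth⟩)
      rwa [Submodule.inf_orthogonal_eq_bot, Submodule.mem_bot] at this
    rw [← hx, ha0, zero_add]
    exact hw

lemma gsoVec_ne_zero {n : ℕ} (B : ℕ → Euc m)
    (hB : LinearIndependent ℝ (fun i : Fin n => B i)) {i : ℕ} (hi : i < n) :
    gsoVec B i ≠ 0 := by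
  intro h0
  have hmem : B i ∈ spanLt B i := by
    have : B i = B i - gsoVec B i := by rw [h0]; abel
    rw [this]
    exact sub_gsoVec_mem B i
  have himg : B '' Set.Iio i = (fun j : Fin n => B j) '' {j : Fin n | (j : ℕ) < i} := by
    ext x
    constructor
    · rintro ⟨j, hj, rfl⟩
      exact ⟨⟨j, lt_trans hj hi⟩, hj, rfl⟩
    · rintro ⟨j, hj, rfl⟩
      exact ⟨j, hj, rfl⟩
  have := hB.notMem_span_image (s := {j : Fin n | (j : ℕ) < i}) (x := ⟨i, hi⟩)
    (by simp)
  rw [← himg] at this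
  exact this hmem

lemma mem_orth_of_inner_gen (C : ℕ → Euc m) {s : ℕ} {y : Euc m}
    (h : ∀ j < s, (inner ℝ (C j) y : ℝ) = 0) : y ∈ (spanLt C s)ᗮ := by
  rw [Submodule.mem_orthogonal]
  intro u hu
  induction hu using Submodule.span_induction with
  | mem u hu => obtain ⟨j, hj, rfl⟩ := hu; exact h j hj
  | zero => simp
  | add u v _ _ hu hv => rw [inner_add_left, hu, hv]; ring
  | smul c u _ hu => rw [inner_smul_left, hu]; simp

section Dual

variable (C : ℕ → Euc m) {ℓ : ℕ}

lemma det_gram_pos (hℓ : 0 < ℓ) (hnz : ∀ j < ℓ, gsoVec C j ≠ 0) :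
    0 < (gram C ℓ).det := by
  rw [det_gram C ℓ hnz]
  apply Finset.prod_pos
  intro t _
  exact pow_pos (norm_pos_iff.mpr (hnz t t.2)) 2

lemma inner_dualFam (hdet : IsUnit (gram C ℓ).det) (i j : Fin ℓ) :
    (inner ℝ (C j) (dualFam C ℓ i) : ℝ) = if j = i then 1 else 0 := by
  have hlt : (i : ℕ) < ℓ := i.2
  show (inner ℝ (C j) (dualFam C ℓ (i : ℕ)) : ℝ) = _
  rw [dualFam, dif_pos hlt]
  rw [inner_sum]
  have : ∀ r : Fin ℓ, (inner ℝ (C (j:ℕ)) (((gram C ℓ)⁻¹ r ⟨(i:ℕ), hlt⟩) • C r) : ℝ)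
      = gram C ℓ j r * (gram C ℓ)⁻¹ r i := by
    intro r
    rw [real_inner_smul_right]
    exact mul_comm _ _
  rw [Finset.sum_congr rfl (fun r _ => this r)]
  have h2 := Matrix.mul_nonsing_inv (gram C ℓ) hdet
  have happ := congrArg (fun M => M j i) h2
  simp only [Matrix.mul_apply, Matrix.one_apply] at happ
  exact happ

lemma gram_dualFam (hdet : IsUnit (gram C ℓ).det) :
    gram (dualFam C ℓ) ℓ = ((gram C ℓ)⁻¹)ᵀ := by
  ext i j
  show (inner ℝ (dualFam C ℓ (i:ℕ)) (dualFam C ℓ (j:ℕ)) : ℝ) = (gram C ℓ)⁻¹ j i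
  have hlt : (i : ℕ) < ℓ := i.2
  conv_lhs => rw [dualFam, dif_pos hlt]
  rw [sum_inner]
  have : ∀ r : Fin ℓ, (inner ℝ ((((gram C ℓ)⁻¹ r ⟨(i:ℕ), hlt⟩)) • C r) (dualFam C ℓ (j:ℕ)) : ℝ)
      = (gram C ℓ)⁻¹ r i * (if r = j then 1 else 0) := by
    intro r
    rw [real_inner_smul_left, inner_dualFam C hdet j r]
  rw [Finset.sum_congr rfl (fun r _ => this r)]
  simp

lemma gram_revDual (hdet : IsUnit (gram C ℓ).det) :
    gram (revDual C ℓ) ℓ = (gram (dualFam C ℓ) ℓ).submatrix Fin.revPerm Fin.revPerm := by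
  ext i j
  show (inner ℝ (revDual C ℓ (i:ℕ)) (revDual C ℓ (j:ℕ)) : ℝ) = _
  rw [revDual, revDual]
  have h1 : ∀ t : Fin ℓ, ℓ - 1 - (t : ℕ) = ((Fin.rev t) : ℕ) := by
    intro t
    rw [Fin.val_rev]
    omega
  rw [h1 i, h1 j]
  rfl

lemma volB_revDual (hℓ : 0 < ℓ) (hnz : ∀ j < ℓ, gsoVec C j ≠ 0) :
    volB (revDual C ℓ) ℓ = (volB C ℓ)⁻¹ := by
  have hpos := det_gram_pos C hℓ hnz
  have hdet : IsUnit (gram C ℓ).det := (ne_of_gt hpos).isUnit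
  rw [volB, gram_revDual C hdet,
    Matrix.det_submatrix_equiv_self (Fin.revPerm : Fin ℓ ≃ Fin ℓ) (gram (dualFam C ℓ) ℓ),
    gram_dualFam C hdet, Matrix.det_transpose, Matrix.det_nonsing_inv]
  rw [Ring.inverse_eq_inv', volB, Real.sqrt_inv]

end Dual

lemma dualFam_last (C : ℕ → Euc m) {ℓ : ℕ} (hℓ : 0 < ℓ)
    (hnz : ∀ j < ℓ, gsoVec C j ≠ 0) :
    dualFam C ℓ (ℓ - 1) = (‖gsoVec C (ℓ - 1)‖ ^ 2)⁻¹ • gsoVec C (ℓ - 1) := by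
  have hpos := det_gram_pos C hℓ hnz
  have hdet : IsUnit (gram C ℓ).det := (ne_of_gt hpos).isUnit
  have hlt : ℓ - 1 < ℓ := by omega
  set g := gsoVec C (ℓ - 1) with hg
  have hgnz : g ≠ 0 := hnz _ hlt
  have hgn : ‖g‖ ≠ 0 := norm_ne_zero_iff.mpr hgnz
  set d := dualFam C ℓ (ℓ - 1) with hd
  set h := (‖g‖ ^ 2)⁻¹ • g with hh
  have hdmem : d ∈ spanLt C ℓ := by
    rw [hd, dualFam, dif_pos hlt]
    apply Submodule.sum_mem
    intro r _
    exact Submodule.smul_mem _ _ (mem_spanLt_self C r.2)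
  have hhmem : h ∈ spanLt C ℓ :=
    Submodule.smul_mem _ _ (gsoVec_mem_spanLt C hlt)
  have hinner : ∀ j < ℓ, (inner ℝ (C j) (d - h) : ℝ) = 0 := by
    intro j hj
    have hd' : (inner ℝ (C j) d : ℝ) = if (⟨j, hj⟩ : Fin ℓ) = ⟨ℓ - 1, hlt⟩ then 1 else 0 :=
      inner_dualFam C hdet ⟨ℓ - 1, hlt⟩ ⟨j, hj⟩
    have hh' : (inner ℝ (C j) h : ℝ) = if (⟨j, hj⟩ : Fin ℓ) = (⟨ℓ - 1, hlt⟩ : Fin ℓ) then 1 else 0 := by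
      rw [hh, real_inner_smul_right]
      by_cases hcase : j = ℓ - 1
      · rw [if_pos (by simp [Fin.ext_iff, hcase])]
        rw [hg, ← hcase, real_inner_comm, inner_gsoVec_self C j]
        have hjn : ‖gsoVec C j‖ ≠ 0 := by rw [hcase]; exact hgn
        rw [hcase]
        field_simp
        exact div_self hgn
      · rw [if_neg (by simp [Fin.ext_iff, hcase])]
        rw [hg, inner_gsoVec_right_eq_zero C (mem_spanLt_self C (by omega))]
        ring
    rw [inner_sub_right, hd', hh', sub_self]
  have hzero : d - h = 0 := by
    have h1 : d - h ∈ spanLt C ℓ := Submodule.sub_mem _ hdmem hhmem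
    have h2 : d - h ∈ (spanLt C ℓ)ᗮ := mem_orth_of_inner_gen C hinner
    have := (Submodule.mem_inf.2 ⟨h1, h2⟩)
    rwa [Submodule.inf_orthogonal_eq_bot, Submodule.mem_bot] at this
  exact sub_eq_zero.mp hzero

lemma norm_dualFam_last (C : ℕ → Euc m) {ℓ : ℕ} (hℓ : 0 < ℓ)
    (hnz : ∀ j < ℓ, gsoVec C j ≠ 0) :
    ‖dualFam C ℓ (ℓ - 1)‖ = ‖gsoVec C (ℓ - 1)‖⁻¹ := by
  rw [dualFam_last C hℓ hnz, norm_smul]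
  have hgn : ‖gsoVec C (ℓ - 1)‖ ≠ 0 := norm_ne_zero_iff.mpr (hnz _ (by omega))
  rw [norm_inv, norm_pow, norm_norm]
  field_simp

/-- The pure real-arithmetic part of the proof. -/
lemma real_chase {q k : ℕ} (hq2 : 2 ≤ q) (hqk : q ≤ k) {η M : ℝ} (hη : 1 ≤ η) (hM : 0 < M)
    (a : ℕ → ℝ) (hapos : ∀ i, (i < k ∨ i ≤ q) → 0 < a i)
    (h1 : a 0 ≤ η * (∏ t : Fin q, a t) ^ ((1 : ℝ) / q))
    (h2 : (a q)⁻¹ ≤ η * ((∏ t : Fin q, a (t + 1))⁻¹) ^ ((1 : ℝ) / q))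
    (hb : ∀ t, q ≤ t → t < k → a t ≤ M) (haqM : a q ≤ M) :
    (∏ t : Fin k, a t) ≤ η ^ (((q : ℝ) * ((q : ℝ) + 1)) / ((q : ℝ) - 1)) * M ^ k := by
  set qR := (q : ℝ) with hqR
  have hqR2 : (2 : ℝ) ≤ qR := by rw [hqR]; exact_mod_cast hq2
  have hqRpos : 0 < qR := by linarith
  have hq1pos : 0 < qR - 1 := by linarith
  have hη0 : (0 : ℝ) < η := lt_of_lt_of_le one_pos hη
  set P0 := ∏ t : Fin q, a t with hP0def
  set P1 := ∏ t : Fin q, a (t + 1) with hP1def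
  have hP0 : 0 < P0 :=
    Finset.prod_pos fun t _ => hapos t (Or.inr (le_of_lt t.2))
  have hP1 : 0 < P1 :=
    Finset.prod_pos fun t _ => hapos (t + 1) (Or.inr (by have := t.2; omega))
  have ha0 : 0 < a 0 := hapos 0 (Or.inr (by omega))
  have haq : 0 < a q := hapos q (Or.inr le_rfl)
  have key : a 0 * P1 = P0 * a q := by
    have e1 : ∏ t : Fin (q + 1), a t = a 0 * P1 := by
      rw [Fin.prod_univ_succ]
      simp [hP1def]
    have e2 : ∏ t : Fin (q + 1), a t = P0 * a q := by
      rw [Fin.prod_univ_castSucc]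
      simp [hP0def]
    rw [← e1, e2]
  have pow_step : ∀ x y : ℝ, 0 ≤ x → 0 < y → x ≤ η * y ^ ((1 : ℝ) / qR) →
      x ^ qR ≤ η ^ qR * y := by
    intro x y hx hy hxy
    have h := Real.rpow_le_rpow hx hxy (le_of_lt hqRpos)
    rwa [Real.mul_rpow (le_of_lt hη0) (Real.rpow_nonneg hy.le _), ← Real.rpow_mul hy.le,
      one_div, inv_mul_cancel₀ (ne_of_gt hqRpos), Real.rpow_one] at h
  have h1' : a 0 ^ qR ≤ η ^ qR * P0 := pow_step _ _ ha0.le hP0 h1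
  have h2' : (a q ^ qR)⁻¹ ≤ η ^ qR * P1⁻¹ := by
    have := pow_step (a q)⁻¹ P1⁻¹ (inv_nonneg.mpr haq.le) (inv_pos.mpr hP1) h2
    rwa [← Real.inv_rpow haq.le]
  have hE : 0 < η ^ qR := Real.rpow_pos_of_pos hη0 _
  have hu : 0 < a q ^ qR := Real.rpow_pos_of_pos haq _
  have h3 : P1 ≤ η ^ qR * a q ^ qR := by
    have hmul := mul_le_mul_of_nonneg_left h2' (le_of_lt (mul_pos hu hP1))
    have hls : (a q ^ qR * P1) * (a q ^ qR)⁻¹ = P1 := by field_simp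
    have hrs : (a q ^ qR * P1) * (η ^ qR * P1⁻¹) = η ^ qR * a q ^ qR := by
      field_simp
    rw [hls, hrs] at hmul
    exact hmul
  have hsplitq : a q ^ (qR - 1) * a q = a q ^ qR := by
    rw [Real.rpow_sub haq, Real.rpow_one, div_mul_cancel₀ _ (ne_of_gt haq)]
  have hsplit0 : a 0 ^ (qR - 1) * a 0 = a 0 ^ qR := by
    rw [Real.rpow_sub ha0, Real.rpow_one, div_mul_cancel₀ _ (ne_of_gt ha0)]
  have haq1 : 0 < a q ^ (qR - 1) := Real.rpow_pos_of_pos haq _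
  have ha01 : 0 < a 0 ^ (qR - 1) := Real.rpow_pos_of_pos ha0 _
  -- Step A : P0 ≤ η^q * aq^{q-1} * a0
  have hA : P0 ≤ η ^ qR * a q ^ (qR - 1) * a 0 := by
    have hstep : a 0 * P1 ≤ a 0 * (η ^ qR * a q ^ qR) :=
      mul_le_mul_of_nonneg_left h3 ha0.le
    have hr : (η ^ qR * a q ^ (qR - 1) * a 0) * a q = a 0 * (η ^ qR * a q ^ qR) := by
      rw [← hsplitq]; ring
    apply le_of_mul_le_mul_right _ haq
    rw [hr, ← key]
    exact hstep
  -- Step B : a0^{q-1} ≤ η^{2q} * aq^{q-1}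
  have h2q : η ^ (2 * qR) = η ^ qR * η ^ qR := by
    rw [two_mul, Real.rpow_add hη0]
  have hB : a 0 ^ (qR - 1) ≤ η ^ (2 * qR) * a q ^ (qR - 1) := by
    have hc : a 0 ^ qR ≤ η ^ qR * (η ^ qR * a q ^ (qR - 1) * a 0) :=
      le_trans h1' (mul_le_mul_of_nonneg_left hA hE.le)
    have hc' : a 0 ^ (qR - 1) * a 0 ≤ (η ^ (2 * qR) * a q ^ (qR - 1)) * a 0 := by
      rw [hsplit0, h2q]
      calc a 0 ^ qR ≤ η ^ qR * (η ^ qR * a q ^ (qR - 1) * a 0) := hc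
        _ = η ^ qR * η ^ qR * a q ^ (qR - 1) * a 0 := by ring
    exact le_of_mul_le_mul_right hc' ha0
  -- Step C : a0 ≤ η^{2q/(q-1)} * aq
  have hC : a 0 ≤ η ^ (2 * qR / (qR - 1)) * a q := by
    have h := Real.rpow_le_rpow ha01.le hB (by positivity : (0:ℝ) ≤ 1 / (qR - 1))
    rwa [← Real.rpow_mul ha0.le, mul_one_div, div_self (ne_of_gt hq1pos), Real.rpow_one,
      Real.mul_rpow (Real.rpow_nonneg hη0.le _) haq1.le,
      ← Real.rpow_mul hη0.le, mul_one_div,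
      ← Real.rpow_mul haq.le, mul_one_div, div_self (ne_of_gt hq1pos), Real.rpow_one] at h
  -- Step D : P0 ≤ η^{q(q+1)/(q-1)} * aq^q
  have hexp : qR + 2 * qR / (qR - 1) = qR * (qR + 1) / (qR - 1) := by
    field_simp
    ring
  have hD : P0 ≤ η ^ (qR * (qR + 1) / (qR - 1)) * a q ^ qR := by
    calc P0 ≤ η ^ qR * a q ^ (qR - 1) * a 0 := hA
      _ ≤ η ^ qR * a q ^ (qR - 1) * (η ^ (2 * qR / (qR - 1)) * a q) :=
          mul_le_mul_of_nonneg_left hC (by positivity)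
      _ = (η ^ qR * η ^ (2 * qR / (qR - 1))) * (a q ^ (qR - 1) * a q) := by ring
      _ = η ^ (qR * (qR + 1) / (qR - 1)) * a q ^ qR := by
          rw [hsplitq, ← Real.rpow_add hη0, hexp]
  -- Step E
  have hMq : a q ^ qR ≤ M ^ q := by
    have := Real.rpow_le_rpow haq.le haqM hqRpos.le
    rwa [hqR, Real.rpow_natCast M q] at this
  have hD' : P0 ≤ η ^ (qR * (qR + 1) / (qR - 1)) * M ^ q :=
    le_trans hD (mul_le_mul_of_nonneg_left hMq (Real.rpow_nonneg hη0.le _))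
  -- Final assembly
  have hprod : ∏ t : Fin k, a t = P0 * ∏ t ∈ Finset.Ico q k, a t := by
    rw [Fin.prod_univ_eq_prod_range, hP0def, Fin.prod_univ_eq_prod_range,
      ← Finset.prod_range_mul_prod_Ico a hqk]
  have hIco : ∏ t ∈ Finset.Ico q k, a t ≤ M ^ (k - q) := by
    calc ∏ t ∈ Finset.Ico q k, a t ≤ ∏ _t ∈ Finset.Ico q k, M := by
          apply Finset.prod_le_prod
          · intro i hi
            rw [Finset.mem_Ico] at hi
            exact (hapos i (Or.inl hi.2)).le
          · intro i hi
            rw [Finset.mem_Ico] at hi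
            exact hb i hi.1 hi.2
      _ = M ^ (k - q) := by rw [Finset.prod_const, Nat.card_Ico]
  calc ∏ t : Fin k, a t = P0 * ∏ t ∈ Finset.Ico q k, a t := hprod
    _ ≤ (η ^ (qR * (qR + 1) / (qR - 1)) * M ^ q) * M ^ (k - q) := by
        apply mul_le_mul hD' hIco (Finset.prod_nonneg ?_) (by positivity)
        intro i hi
        rw [Finset.mem_Ico] at hi
        exact (hapos i (Or.inl hi.2)).le
    _ = η ^ (qR * (qR + 1) / (qR - 1)) * M ^ k := by
        rw [mul_assoc, ← pow_add]
        congr 2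
        omega

end GSAux

open GSAux in
/-- if `B_{[1,q+1]}` is `η`-twin-reduced and `‖b_i*‖ ≤ M` for all
`i ∈ [q+1, max{k,q+1}]`, then `vol(L(B_{[1,k]})) ≤ η^{q(q+1)/(q-1)} M^k`. -/
theorem prefix_volume_bound {m k q n : ℕ} (hq2 : 2 ≤ q) (hqk : q ≤ k)
    (hn : max k (q + 1) ≤ n) {η M : ℝ} (hη : 1 ≤ η) (hM : 0 < M)
    (B : ℕ → Euc m) (hB : LinearIndependent ℝ (fun i : Fin n => B i))
    (hTwin : TwinReduced η B q)
    (hbound : ∀ i, q + 1 ≤ i → i ≤ max k (q + 1) → ‖gsoVec B (i - 1)‖ ≤ M) :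
    volB B k ≤ η ^ (((q : ℝ) * ((q : ℝ) + 1)) / ((q : ℝ) - 1)) * M ^ k := by
  have hkn : k ≤ n := le_trans (le_max_left _ _) hn
  have hqn : q + 1 ≤ n := le_trans (le_max_right _ _) hn
  set a : ℕ → ℝ := fun i => ‖gsoVec B i‖ with ha
  have hnz : ∀ j < n, gsoVec B j ≠ 0 := fun j hj => gsoVec_ne_zero B hB hj
  have hapos : ∀ i, (i < k ∨ i ≤ q) → 0 < a i := fun i hi =>
    norm_pos_iff.mpr (hnz i (by rcases hi with h | h <;> omega))
  -- hypothesis 1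
  have h1 : a 0 ≤ η * (∏ t : Fin q, a t) ^ ((1 : ℝ) / q) := by
    have ht1 := hTwin.1
    rw [HSVPReduced, block_zero B] at ht1
    have hg0 : gsoVec B 0 = B 0 := congrFun (block_zero B) 0
    rw [volB_eq_prod B q (fun j hj => hnz j (by omega))] at ht1
    rw [ha]
    simpa [hg0] using ht1
  -- hypothesis 2
  set C := block B 1 with hC
  have hgC : ∀ t, t < q → gsoVec C t = gsoVec B (1 + t) := fun t _ => gsoVec_block B 1 t
  have hnzC : ∀ j < q, gsoVec C j ≠ 0 := by
    intro j hj
    rw [hgC j hj]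
    exact hnz (1 + j) (by omega)
  have hq0 : 0 < q := by omega
  have h2 : (a q)⁻¹ ≤ η * ((∏ t : Fin q, a (t + 1))⁻¹) ^ ((1 : ℝ) / q) := by
    have ht2 := hTwin.2
    rw [DHSVPReduced, HSVPReduced] at ht2
    have hrev0 : revDual C q 0 = dualFam C q (q - 1) := rfl
    have hnorm : ‖revDual C q 0‖ = (a q)⁻¹ := by
      rw [hrev0, norm_dualFam_last C hq0 hnzC, hgC (q - 1) (by omega)]
      have : 1 + (q - 1) = q := by omega
      rw [this]
    have hvol : volB (revDual C q) q = (∏ t : Fin q, a (t + 1))⁻¹ := by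
      rw [volB_revDual C hq0 hnzC, volB_eq_prod C q hnzC]
      congr 1
      apply Finset.prod_congr rfl
      intro t _
      rw [hgC t t.2]
      have : 1 + (t : ℕ) = (t : ℕ) + 1 := by omega
      rw [this]
    rw [hnorm, hvol] at ht2
    exact ht2
  -- bounds
  have hb : ∀ t, q ≤ t → t < k → a t ≤ M := by
    intro t hqt htk
    have := hbound (t + 1) (by omega) (by omega)
    simpa using this
  have haqM : a q ≤ M := by
    have := hbound (q + 1) (le_refl _) (le_max_right _ _)
    simpa using this
  rw [volB_eq_prod B k (fun j hj => hnz j (by omega))]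
  exact real_chase hq2 hqk hη hM a hapos h1 h2 hb haqM
end
end
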